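/- If C is a trace-class operator on a Hilbert space with singular value decomposition C = Σₙ λₙ |fₙ⟩⟨gₙ|, and X is a self-adjoint operator with XC trace class, then for every n with λₙ ≠ 0 the vector fₙ lies in the domain of X. -/

import Mathlib

open MeasureTheory

variable {H : Type*} [NormedAddCommGroup H] [InnerProductSpace ℂ H] [CompleteSpace H]

local notation "⟪" x ", " y "⟫" => @inner ℂ _ _ x y

/-- If C is a trace-class operator with singular value decomposition
`C = Σₙ λₙ |fₙ⟩⟨gₙ|` and X is self-adjoint such that XC is trace class (in particular the
sesquilinear form `(x, g) ↦ ⟨Xx, Cg⟩` is bounded), then for every n with `λₙ ≠ 0` the singular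
vector `fₙ` lies in the domain of X. -/
theorem singular_vector_mem_domain
    (X : H →ₗ.[ℂ] H) (hX : IsSelfAdjoint X)
    (C : H →L[ℂ] H) (lam : ℕ → ℝ) (hlam_nonneg : ∀ n, 0 ≤ lam n)
    (hlam : Summable lam)
    (f g : ℕ → H) (hf : Orthonormal ℂ f) (hg : Orthonormal ℂ g)
    (hSVD : C = ∑' n, (lam n : ℂ) • ((innerSL ℂ (g n)).smulRight (f n)))
    (M : ℝ)
    (hform : ∀ (x : H) (hx : x ∈ X.domain) (y : H),
      ‖⟪X ⟨x, hx⟩, C y⟫‖ ≤ M * ‖x‖ * ‖y‖) :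
    ∀ n, lam n ≠ 0 → f n ∈ X.domain := by
  intro n hn
  have hsum : Summable (fun m => (lam m : ℂ) • ((innerSL ℂ (g m)).smulRight (f m))) := by
    apply Summable.of_norm
    apply hlam.of_nonneg_of_le (fun m => norm_nonneg _)
    intro m
    calc ‖(lam m : ℂ) • ((innerSL ℂ (g m)).smulRight (f m))‖
        ≤ ‖(lam m : ℂ)‖ * ‖(innerSL ℂ (g m)).smulRight (f m)‖ := norm_smul_le _ _
      _ ≤ lam m := by
          rw [ContinuousLinearMap.norm_smulRight_apply, innerSL_apply_norm,
            hg.1 m, hf.1 m, Complex.norm_real, Real.norm_eq_abs,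
            abs_of_nonneg (hlam_nonneg m)]
          simp
  have hCgn : C (g n) = (lam n : ℂ) • f n := by
    rw [hSVD]
    have hs := ((ContinuousLinearMap.apply ℂ H (g n)).hasSum hsum.hasSum).tsum_eq
    simp only [ContinuousLinearMap.apply_apply] at hs
    rw [← hs]
    have : ∀ m, ((lam m : ℂ) • ((innerSL ℂ (g m)).smulRight (f m))) (g n)
        = if m = n then (lam n : ℂ) • f n else 0 := by
      intro m
      simp only [ContinuousLinearMap.smul_apply, ContinuousLinearMap.smulRight_apply,
        innerSL_apply_apply]
      rcases eq_or_ne m n with rfl | hmn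
      · rw [show ⟪g m, g m⟫ = (1:ℂ) by
          rw [inner_self_eq_norm_sq_to_K, hg.1 m]; norm_num]
        simp
      · rw [hg.2 hmn]; simp [hmn]
    rw [tsum_congr this, tsum_ite_eq]
  rw [← LinearPMap.isSelfAdjoint_def.mp hX]
  rw [LinearPMap.mem_adjoint_domain_iff]
  apply AddMonoidHomClass.continuous_of_bound ((innerₛₗ ℂ (f n)).comp X.toFun) (M / lam n)
  intro x
  have hlamn : 0 < lam n := lt_of_le_of_ne (hlam_nonneg n) (Ne.symm hn)
  have key : lam n * ‖⟪X x, f n⟫‖ ≤ M * ‖(x : H)‖ := by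
    have h1 := hform (x : H) x.2 (g n)
    rw [hCgn, inner_smul_right] at h1
    rw [show (X ⟨(x:H), x.2⟩) = X x by congr] at h1
    rw [norm_mul, Complex.norm_real, Real.norm_eq_abs, abs_of_nonneg (hlam_nonneg n)] at h1
    calc lam n * ‖⟪X x, f n⟫‖ ≤ M * ‖(x:H)‖ * ‖g n‖ := h1
      _ = M * ‖(x:H)‖ := by rw [hg.1 n, mul_one]
  calc ‖((innerₛₗ ℂ (f n)).comp X.toFun) x‖ = ‖⟪X x, f n⟫‖ := by
        simp only [LinearMap.coe_comp, Function.comp_apply, innerₛₗ_apply_apply]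
        rw [← inner_conj_symm, RCLike.norm_conj]; rfl
    _ ≤ M / lam n * ‖x‖ := by
        rw [div_mul_eq_mul_div, le_div_iff₀ hlamn]
        calc ‖⟪X x, f n⟫‖ * lam n = lam n * ‖⟪X x, f n⟫‖ := mul_comm _ _
          _ ≤ M * ‖(x:H)‖ := key
          _ = M * ‖x‖ := rfl
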